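/- Let H be a complex Hilbert space and A a bounded linear operator on H. Then (1/4)·‖A*A + AA*‖ ≤ ω(A)² ≤ (1/2)·‖A*A + AA*‖. (Note that A*A = |A|² and AA* = |A*|².) -/

import Mathlib

open ComplexConjugate

/-- The numerical radius of a bounded linear operator on a complex Hilbert space:
`ω(A) = sup { ‖⟨Ax, x⟩‖ : ‖x‖ = 1 }`. -/
noncomputable def numericalRadius {H : Type*} [NormedAddCommGroup H] [InnerProductSpace ℂ H]
    [CompleteSpace H] (A : H →L[ℂ] H) : ℝ :=
  ⨆ x : {x : H // ‖x‖ = 1}, ‖(inner ℂ (A x) (x : H) : ℂ)‖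

section Aux

variable {H : Type*} [NormedAddCommGroup H] [InnerProductSpace ℂ H] [CompleteSpace H]

lemma aux_selfAdjoint_norm_le (B : H →L[ℂ] H) (hB : ContinuousLinearMap.adjoint B = B)
    {M : ℝ} (hM : 0 ≤ M) (h : ∀ x : H, ‖(inner ℂ (B x) x : ℂ)‖ ≤ M * ‖x‖ ^ 2) : ‖B‖ ≤ M := by
  apply ContinuousLinearMap.opNorm_le_bound _ hM
  intro x
  have key : ∀ u v : H, Complex.re (inner ℂ (B u) v : ℂ) ≤ M * (‖u‖ ^ 2 + ‖v‖ ^ 2) / 2 := by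
    intro u v
    have hsym : (inner ℂ (B v) u : ℂ) = conj (inner ℂ (B u) v : ℂ) := by
      rw [← hB, ContinuousLinearMap.adjoint_inner_left, inner_conj_symm]
      rw [hB]
    have h1 : (inner ℂ (B (u + v)) (u + v) : ℂ) - inner ℂ (B (u - v)) (u - v)
        = 4 * (Complex.re (inner ℂ (B u) v : ℂ) : ℂ) := by
      simp only [map_add, map_sub, inner_add_left, inner_add_right, inner_sub_left,
        inner_sub_right]
      rw [Complex.re_eq_add_conj]
      rw [← hsym]
      ring
    have h2 : (4:ℝ) * Complex.re (inner ℂ (B u) v : ℂ)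
        = Complex.re ((inner ℂ (B (u + v)) (u + v) : ℂ) - inner ℂ (B (u - v)) (u - v)) := by
      rw [h1]; simp
    have h3 : Complex.re ((inner ℂ (B (u + v)) (u + v) : ℂ) - inner ℂ (B (u - v)) (u - v))
        ≤ ‖(inner ℂ (B (u + v)) (u + v) : ℂ)‖ + ‖(inner ℂ (B (u - v)) (u - v) : ℂ)‖ := by
      rw [Complex.sub_re]
      have := Complex.abs_re_le_norm ((inner ℂ (B (u + v)) (u + v) : ℂ))
      have := Complex.abs_re_le_norm ((inner ℂ (B (u - v)) (u - v) : ℂ))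
      cases abs_cases (Complex.re (inner ℂ (B (u + v)) (u + v) : ℂ)) <;>
        cases abs_cases (Complex.re (inner ℂ (B (u - v)) (u - v) : ℂ)) <;> linarith
    have h4 := h (u + v)
    have h5 := h (u - v)
    have hpar := parallelogram_law_with_norm ℂ u v
    nlinarith [norm_nonneg (u+v), norm_nonneg (u-v)]
  by_cases hx : B x = 0
  · rw [hx]; simp; positivity
  · set r : ℝ := ‖x‖ / ‖B x‖ with hr
    have hrpos : 0 ≤ r := by positivity
    have h6 := key x ((r : ℂ) • B x)
    have hBx : 0 < ‖B x‖ := norm_pos_iff.mpr hx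
    have h7 : Complex.re (inner ℂ (B x) ((r : ℂ) • B x) : ℂ) = r * ‖B x‖ ^ 2 := by
      rw [inner_smul_right, inner_self_eq_norm_sq_to_K]
      simp [Complex.mul_re, ← Complex.ofReal_pow]
    have h8 : ‖(r : ℂ) • B x‖ = ‖x‖ := by
      rw [norm_smul]
      simp only [Complex.norm_real, Real.norm_eq_abs, abs_of_nonneg hrpos, hr]
      rw [abs_of_nonneg (by positivity), div_mul_eq_mul_div, mul_div_assoc, div_self (ne_of_gt hBx), mul_one]
    rw [h7, h8] at h6
    have : r * ‖B x‖ ^ 2 = ‖x‖ * ‖B x‖ := by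
      rw [hr]; field_simp
    rw [this] at h6
    by_cases hx0 : x = 0
    · subst hx0; exact absurd (map_zero B) hx
    · have hxx : 0 < ‖x‖ := norm_pos_iff.mpr hx0
      nlinarith

lemma aux_nr_nonneg (A : H →L[ℂ] H) : 0 ≤ numericalRadius A :=
  Real.iSup_nonneg fun _ => norm_nonneg _

lemma aux_bddAbove (A : H →L[ℂ] H) :
    BddAbove (Set.range fun x : {x : H // ‖x‖ = 1} => ‖(inner ℂ (A x) (x : H) : ℂ)‖) := by
  refine ⟨‖A‖, ?_⟩
  rintro _ ⟨x, rfl⟩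
  calc ‖(inner ℂ (A x) (x : H) : ℂ)‖ ≤ ‖A (x : H)‖ * ‖(x : H)‖ := norm_inner_le_norm _ _
    _ ≤ ‖A‖ * ‖(x : H)‖ * ‖(x : H)‖ := by
        gcongr; exact A.le_opNorm _
    _ = ‖A‖ := by rw [x.2]; ring

lemma aux_inner_le_nr (A : H →L[ℂ] H) (x : H) :
    ‖(inner ℂ (A x) x : ℂ)‖ ≤ numericalRadius A * ‖x‖ ^ 2 := by
  by_cases hx0 : x = 0
  · simp [hx0]
  · have hxx : (0:ℝ) < ‖x‖ := norm_pos_iff.mpr hx0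
    set u : H := ((‖x‖ : ℂ))⁻¹ • x with hu
    have hnu : ‖u‖ = 1 := by
      rw [hu, norm_smul, norm_inv, Complex.norm_real, Real.norm_eq_abs, abs_of_pos hxx,
        inv_mul_cancel₀ (ne_of_gt hxx)]
    have hxu : ((‖x‖ : ℂ)) • u = x := by
      rw [hu, smul_smul, mul_inv_cancel₀ (by exact_mod_cast ne_of_gt hxx), one_smul]
    have h1 : (inner ℂ (A x) x : ℂ) = (‖x‖:ℂ) * conj ((‖x‖:ℂ)) * inner ℂ (A u) u := by
      conv_lhs => rw [← hxu]
      rw [map_smul, inner_smul_left, inner_smul_right]; ring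
    have h2 : ‖(inner ℂ (A u) u : ℂ)‖ ≤ numericalRadius A :=
      le_ciSup (aux_bddAbove A) (⟨u, hnu⟩ : {x : H // ‖x‖ = 1})
    rw [h1]
    rw [norm_mul, norm_mul, RingHomIsometric.norm_map]
    simp only [Complex.norm_real, Real.norm_eq_abs, abs_of_pos hxx]
    calc ‖x‖ * ‖x‖ * ‖(inner ℂ (A u) u : ℂ)‖ ≤ ‖x‖ * ‖x‖ * numericalRadius A := by
          gcongr
      _ = numericalRadius A * ‖x‖ ^ 2 := by ring

end Aux

set_option maxHeartbeats 1000000 in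
theorem quarter_norm_le_numericalRadius_sq_le_half_norm
    {H : Type*} [NormedAddCommGroup H] [InnerProductSpace ℂ H] [CompleteSpace H]
    (A : H →L[ℂ] H) :
    (1 / 4) * ‖ContinuousLinearMap.adjoint A * A + A * ContinuousLinearMap.adjoint A‖ ≤
        numericalRadius A ^ 2 ∧
      numericalRadius A ^ 2 ≤
        (1 / 2) * ‖ContinuousLinearMap.adjoint A * A + A * ContinuousLinearMap.adjoint A‖ := by
  set K : H →L[ℂ] H := ContinuousLinearMap.adjoint A * A + A * ContinuousLinearMap.adjoint A
    with hK
  set B : H →L[ℂ] H := (2:ℂ)⁻¹ • (A + ContinuousLinearMap.adjoint A) with hB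
  set C : H →L[ℂ] H := (2:ℂ)⁻¹ • (Complex.I • (ContinuousLinearMap.adjoint A - A)) with hC
  have hBadj : ContinuousLinearMap.adjoint B = B := by
    rw [← ContinuousLinearMap.star_eq_adjoint, hB]
    simp [star_smul, star_add, ContinuousLinearMap.star_eq_adjoint,
      ContinuousLinearMap.adjoint_adjoint, Complex.conj_I, add_comm]
  have hCadj : ContinuousLinearMap.adjoint C = C := by
    rw [← ContinuousLinearMap.star_eq_adjoint, hC]
    simp [star_smul, star_sub, ContinuousLinearMap.star_eq_adjoint,
      ContinuousLinearMap.adjoint_adjoint, Complex.conj_I, smul_sub, neg_smul, neg_sub]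
    abel
  have hS : B * B + C * C = (2:ℂ)⁻¹ • K := by
    rw [hB, hC, hK]
    simp only [smul_mul_assoc, mul_smul_comm, smul_smul, mul_add, add_mul, mul_sub, sub_mul,
      smul_add, smul_sub]
    match_scalars <;> (try simp [Complex.ext_iff]) <;> (try norm_num)
  have hBx : ∀ x : H, (inner ℂ (B x) x : ℂ) = ((inner ℂ (A x) x : ℂ).re : ℂ) := by
    intro x
    rw [hB]
    simp only [ContinuousLinearMap.smul_apply, ContinuousLinearMap.add_apply, inner_smul_left,
      inner_add_left, ContinuousLinearMap.adjoint_inner_left]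
    rw [← inner_conj_symm x (A x), Complex.re_eq_add_conj]
    simp [Complex.conj_ofNat]
    ring
  have hCx : ∀ x : H, (inner ℂ (C x) x : ℂ) = -(((inner ℂ (A x) x : ℂ).im : ℂ)) := by
    intro x
    rw [hC]
    simp only [ContinuousLinearMap.smul_apply, ContinuousLinearMap.sub_apply, inner_smul_left,
      inner_sub_left, ContinuousLinearMap.adjoint_inner_left]
    rw [← inner_conj_symm x (A x), Complex.im_eq_sub_conj]
    simp [Complex.conj_I]
    field_simp
    simp only [Complex.conj_ofNat]
    linear_combination (2 * (inner ℂ x (A x) : ℂ) - 2 * (inner ℂ (A x) x : ℂ)) * Complex.I_sq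
  have hBB : ∀ x : H, (inner ℂ ((B * B) x) x : ℂ) = ((‖B x‖ ^ 2 : ℝ) : ℂ) := by
    intro x
    rw [ContinuousLinearMap.mul_apply]
    conv_lhs => rw [← hBadj]
    rw [ContinuousLinearMap.adjoint_inner_left, hBadj, inner_self_eq_norm_sq_to_K]
    norm_cast
  have hCC : ∀ x : H, (inner ℂ ((C * C) x) x : ℂ) = ((‖C x‖ ^ 2 : ℝ) : ℂ) := by
    intro x
    rw [ContinuousLinearMap.mul_apply]
    conv_lhs => rw [← hCadj]
    rw [ContinuousLinearMap.adjoint_inner_left, hCadj, inner_self_eq_norm_sq_to_K]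
    norm_cast
  have hnormS : ‖B * B + C * C‖ = 2⁻¹ * ‖K‖ := by
    rw [hS, norm_smul]
    norm_num
  have hKnn : (0:ℝ) ≤ 2⁻¹ * ‖K‖ := by positivity
  have hωnn := aux_nr_nonneg A
  -- Upper bound ingredients
  have hmain : ∀ x : H, ‖x‖ = 1 → ‖(inner ℂ (A x) x : ℂ)‖ ^ 2 ≤ 2⁻¹ * ‖K‖ := by
    intro x hx
    have e1 : ‖(inner ℂ (A x) x : ℂ)‖ ^ 2
        = ‖(inner ℂ (B x) x : ℂ)‖ ^ 2 + ‖(inner ℂ (C x) x : ℂ)‖ ^ 2 := by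
      rw [hBx x, hCx x, norm_neg]
      rw [
        Complex.sq_norm, Complex.sq_norm, Complex.sq_norm,
        Complex.normSq_ofReal, Complex.normSq_ofReal, Complex.normSq_apply]
      try ring
    have e2 : ‖(inner ℂ (B x) x : ℂ)‖ ≤ ‖B x‖ := by
      calc ‖(inner ℂ (B x) x : ℂ)‖ ≤ ‖B x‖ * ‖x‖ := norm_inner_le_norm _ _
        _ = ‖B x‖ := by rw [hx, mul_one]
    have e3 : ‖(inner ℂ (C x) x : ℂ)‖ ≤ ‖C x‖ := by
      calc ‖(inner ℂ (C x) x : ℂ)‖ ≤ ‖C x‖ * ‖x‖ := norm_inner_le_norm _ _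
        _ = ‖C x‖ := by rw [hx, mul_one]
    have e4 : ‖B x‖ ^ 2 + ‖C x‖ ^ 2 = ((inner ℂ ((B * B + C * C) x) x : ℂ)).re := by
      rw [ContinuousLinearMap.add_apply, inner_add_left, hBB x, hCC x,
        ← Complex.ofReal_add, Complex.ofReal_re]
    have e5 : ((inner ℂ ((B * B + C * C) x) x : ℂ)).re ≤ ‖B * B + C * C‖ := by
      calc ((inner ℂ ((B * B + C * C) x) x : ℂ)).re
          ≤ ‖(inner ℂ ((B * B + C * C) x) x : ℂ)‖ := Complex.re_le_norm _
        _ ≤ ‖(B * B + C * C) x‖ * ‖x‖ := norm_inner_le_norm _ _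
        _ ≤ ‖B * B + C * C‖ * ‖x‖ * ‖x‖ := by gcongr; exact (B * B + C * C).le_opNorm _
        _ = ‖B * B + C * C‖ := by rw [hx]; ring
    have := norm_nonneg (inner ℂ (B x) x : ℂ)
    have := norm_nonneg (inner ℂ (C x) x : ℂ)
    nlinarith [hnormS]
  have hupper : numericalRadius A ^ 2 ≤ 2⁻¹ * ‖K‖ := by
    by_cases hne : Nonempty {x : H // ‖x‖ = 1}
    · have hω : numericalRadius A ≤ Real.sqrt (2⁻¹ * ‖K‖) := by
        apply ciSup_le
        intro x
        rw [← Real.sqrt_sq (norm_nonneg (inner ℂ (A x) (x : H) : ℂ))]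
        exact Real.sqrt_le_sqrt (hmain x x.2)
      calc numericalRadius A ^ 2 ≤ Real.sqrt (2⁻¹ * ‖K‖) ^ 2 := by
            exact pow_le_pow_left₀ hωnn hω 2
        _ = 2⁻¹ * ‖K‖ := Real.sq_sqrt hKnn
    · have : IsEmpty {x : H // ‖x‖ = 1} := not_nonempty_iff.mp hne
      rw [numericalRadius, Real.iSup_of_isEmpty]
      simpa using hKnn
  -- Lower bound ingredients
  have hnB : ‖B‖ ≤ numericalRadius A := by
    apply aux_selfAdjoint_norm_le B hBadj hωnn
    intro x
    rw [hBx x]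
    calc ‖(((inner ℂ (A x) x : ℂ).re : ℝ) : ℂ)‖ = |(inner ℂ (A x) x : ℂ).re| := by
          rw [Complex.norm_real, Real.norm_eq_abs]
      _ ≤ ‖(inner ℂ (A x) x : ℂ)‖ := by exact Complex.abs_re_le_norm _
      _ ≤ numericalRadius A * ‖x‖ ^ 2 := aux_inner_le_nr A x
  have hnC : ‖C‖ ≤ numericalRadius A := by
    apply aux_selfAdjoint_norm_le C hCadj hωnn
    intro x
    rw [hCx x]
    calc ‖(-(((inner ℂ (A x) x : ℂ).im : ℝ) : ℂ))‖ = |(inner ℂ (A x) x : ℂ).im| := by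
          rw [norm_neg, Complex.norm_real, Real.norm_eq_abs]
      _ ≤ ‖(inner ℂ (A x) x : ℂ)‖ := by exact Complex.abs_im_le_norm _
      _ ≤ numericalRadius A * ‖x‖ ^ 2 := aux_inner_le_nr A x
  have hstarB : star B = B := by rw [ContinuousLinearMap.star_eq_adjoint]; exact hBadj
  have hstarC : star C = C := by rw [ContinuousLinearMap.star_eq_adjoint]; exact hCadj
  have hBBnorm : ‖B * B‖ = ‖B‖ * ‖B‖ := by
    conv_lhs => rw [show (B * B : H →L[ℂ] H) = star B * B from by rw [hstarB]]
    exact CStarRing.norm_star_mul_self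
  have hCCnorm : ‖C * C‖ = ‖C‖ * ‖C‖ := by
    conv_lhs => rw [show (C * C : H →L[ℂ] H) = star C * C from by rw [hstarC]]
    exact CStarRing.norm_star_mul_self
  have hlow : 2⁻¹ * ‖K‖ ≤ ‖B‖ * ‖B‖ + ‖C‖ * ‖C‖ := by
    calc 2⁻¹ * ‖K‖ = ‖B * B + C * C‖ := hnormS.symm
      _ ≤ ‖B * B‖ + ‖C * C‖ := norm_add_le _ _
      _ = ‖B‖ * ‖B‖ + ‖C‖ * ‖C‖ := by rw [hBBnorm, hCCnorm]
  constructor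
  · have h1 : ‖B‖ * ‖B‖ ≤ numericalRadius A ^ 2 := by
      nlinarith [norm_nonneg B]
    have h2 : ‖C‖ * ‖C‖ ≤ numericalRadius A ^ 2 := by
      nlinarith [norm_nonneg C]
    nlinarith
  · linarith [hupper]
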